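/- Let I be a monomial ideal of S = K[x_1,...,x_n] with x_1 ∉ I, let S' = K[x_2,...,x_n], I' = I ∩ S', and I'' = (I : x_1). Then there is a direct sum decomposition of K-vector spaces S/I = (S'/I'S') ⊕ x_1(S/I''S), and consequently sdepth_S(S/I) ≥ min{ sdepth_{S'}(S'/I'S'), sdepth_S(S/I'') }. -/

import Mathlib

open MvPolynomial

namespace Paper

variable (K : Type) [Field K]

/-- The monomial `x^a` in `K[x_0, …, x_{n-1}]`. -/
noncomputable def mono (n : ℕ) (a : Fin n → ℕ) : MvPolynomial (Fin n) K :=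
  MvPolynomial.monomial (Finsupp.equivFunOnFinite.symm a) 1

/-- A monomial ideal: an ideal generated by the monomials it contains. -/
def IsMonomialIdeal (n : ℕ) (I : Ideal (MvPolynomial (Fin n) K)) : Prop :=
  I = Ideal.span ((mono K n) '' {a | mono K n a ∈ I})

/-- The set of exponent vectors of the minimal monomial generators `G(I)`. -/
def minGen (n : ℕ) (I : Ideal (MvPolynomial (Fin n) K)) : Set (Fin n → ℕ) :=
  {a | mono K n a ∈ I ∧ ∀ i : Fin n, 0 < a i → mono K n (a - Pi.single i 1) ∉ I}

/-- The monomial ideal generated by a set of exponent vectors. -/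
noncomputable def monomialIdealOf (n : ℕ) (A : Set (Fin n → ℕ)) :
    Ideal (MvPolynomial (Fin n) K) :=
  Ideal.span ((mono K n) '' A)

/-- Weakly polymatroidal monomial ideal. -/
def WeaklyPolymatroidal (n : ℕ) (I : Ideal (MvPolynomial (Fin n) K)) : Prop :=
  IsMonomialIdeal K n I ∧
    ∀ a b : Fin n → ℕ, a ∈ minGen K n I → b ∈ minGen K n I →
      ∀ t : Fin n, (∀ s : Fin n, s < t → a s = b s) → b t < a t →
        ∃ j : Fin n, t < j ∧ 0 < b j ∧
          mono K n (b + Pi.single t 1 - Pi.single j 1) ∈ I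

/-- Polymatroidal monomial ideal. -/
def Polymatroidal (n : ℕ) (I : Ideal (MvPolynomial (Fin n) K)) : Prop :=
  IsMonomialIdeal K n I ∧
    (∃ d : ℕ, ∀ a ∈ minGen K n I, ∑ i, a i = d) ∧
    ∀ a b : Fin n → ℕ, a ∈ minGen K n I → b ∈ minGen K n I →
      ∀ i : Fin n, b i < a i →
        ∃ j : Fin n, a j < b j ∧
          (a + Pi.single j 1 - Pi.single i 1) ∈ minGen K n I

/-- `I` has linear quotients with respect to the order `u 0 ≺ u 1 ≺ …` on its
minimal monomial generators: each colon ideal `(u 0, …, u (i-1)) : u i` is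
generated by a subset of the variables. -/
def LinearQuotientsWith (n : ℕ) (I : Ideal (MvPolynomial (Fin n) K)) (t : ℕ)
    (u : Fin t → (Fin n → ℕ)) : Prop :=
  Function.Injective u ∧ Set.range u = minGen K n I ∧
    ∀ i : Fin t, 0 < (i : ℕ) →
      ∃ V : Set (Fin n),
        Submodule.colon (monomialIdealOf K n (u '' {j | (j : ℕ) < (i : ℕ)}))
            (Ideal.span {mono K n (u i)}) =
          Ideal.span ((fun k => (X k : MvPolynomial (Fin n) K)) '' V)

/-- `pd_R M ≤ d`, defined recursively via kernels of surjections from projectives. -/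
def HasProjDimLE (R : Type) [CommRing R] :
    ℕ → ∀ (M : Type) [AddCommGroup M] [Module R M], Prop
  | 0, M, _, _ => Module.Projective R M
  | (d + 1), M, _, _ =>
      ∃ (P : Type) (_ : AddCommGroup P) (_ : Module R P) (f : P →ₗ[R] M),
        Module.Projective R P ∧ Function.Surjective f ∧
          HasProjDimLE R d (LinearMap.ker f)

/-- The projective dimension of `M` over `R`, as an element of `ℕ∞`. -/
noncomputable def projDim (R : Type) [CommRing R] (M : Type) [AddCommGroup M]
    [Module R M] : ℕ∞ :=
  sInf ((↑) '' {d : ℕ | HasProjDimLE R d M})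

/-- The depth of `M` with respect to the ideal `J`: the supremum of the lengths of
`M`-regular sequences consisting of elements of `J`. -/
noncomputable def depth (R : Type) [CommRing R] (J : Ideal R) (M : Type)
    [AddCommGroup M] [Module R M] : ℕ∞ :=
  sSup ((↑) '' {k : ℕ | ∃ rs : List R, rs.length = k ∧ (∀ r ∈ rs, r ∈ J) ∧
    RingTheory.Sequence.IsRegular M rs})

/-- The graded maximal ideal `(x_0, …, x_{n-1})` of `K[x_0, …, x_{n-1}]`. -/
noncomputable def maxIdeal (n : ℕ) : Ideal (MvPolynomial (Fin n) K) :=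
  Ideal.span (Set.range X)

/-- The Stanley space `x^a · K[Z]`, as a `K`-subspace of `K[x_0, …, x_{n-1}]`. -/
noncomputable def stanleySpace (n : ℕ) (a : Fin n → ℕ) (Z : Finset (Fin n)) :
    Submodule K (MvPolynomial (Fin n) K) :=
  Submodule.span K ((fun e => mono K n (a + e)) '' {e | ∀ j, j ∉ Z → e j = 0})

/-- A Stanley decomposition of `S/I`: a `K`-vector space decomposition
`S = I ⊕ (⊕ᵢ x^{a i} K[Z i])`. -/
def IsStanleyDecOfQuot (n : ℕ) (I : Ideal (MvPolynomial (Fin n) K)) (t : ℕ)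
    (a : Fin t → (Fin n → ℕ)) (Z : Fin t → Finset (Fin n)) : Prop :=
  iSupIndep (fun o : Option (Fin t) =>
      o.elim (Submodule.restrictScalars K I) (fun i => stanleySpace K n (a i) (Z i))) ∧
    (⨆ o : Option (Fin t),
      o.elim (Submodule.restrictScalars K I) (fun i => stanleySpace K n (a i) (Z i))) = ⊤

/-- The Stanley depth of `S/I`. -/
noncomputable def sdepthQuot (n : ℕ) (I : Ideal (MvPolynomial (Fin n) K)) : ℕ∞ :=
  sSup ((↑) '' {d : ℕ | ∃ (t : ℕ) (a : Fin t → (Fin n → ℕ)) (Z : Fin t → Finset (Fin n)),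
    IsStanleyDecOfQuot K n I t a Z ∧ ∀ i, d ≤ (Z i).card})

/-- A Stanley decomposition of the ideal `I` itself: `I = ⊕ᵢ x^{a i} K[Z i]`
as `K`-vector spaces. -/
def IsStanleyDecOfIdeal (n : ℕ) (I : Ideal (MvPolynomial (Fin n) K)) (t : ℕ)
    (a : Fin t → (Fin n → ℕ)) (Z : Fin t → Finset (Fin n)) : Prop :=
  iSupIndep (fun i : Fin t => stanleySpace K n (a i) (Z i)) ∧
    (⨆ i : Fin t, stanleySpace K n (a i) (Z i)) = Submodule.restrictScalars K I

/-- The Stanley depth of the ideal `I`. -/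
noncomputable def sdepthIdeal (n : ℕ) (I : Ideal (MvPolynomial (Fin n) K)) : ℕ∞ :=
  sSup ((↑) '' {d : ℕ | ∃ (t : ℕ) (a : Fin t → (Fin n → ℕ)) (Z : Fin t → Finset (Fin n)),
    IsStanleyDecOfIdeal K n I t a Z ∧ ∀ i, d ≤ (Z i).card})

end Paper

namespace SplitProof

open Paper MvPolynomial

variable {K : Type} [Field K]

/-- The monomial basis of `K[x_0,…,x_{n-1}]` indexed by `Fin n → ℕ`. -/
noncomputable def B (K : Type) [Field K] (n : ℕ) :
    Module.Basis (Fin n → ℕ) K (MvPolynomial (Fin n) K) :=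
  (MvPolynomial.basisMonomials (Fin n) K).reindex Finsupp.equivFunOnFinite

lemma B_apply (n : ℕ) (d : Fin n → ℕ) : B K n d = mono K n d := by
  simp [B, Module.Basis.reindex_apply, MvPolynomial.coe_basisMonomials, mono]

/-- The `K`-span of the set of monomials with exponent vectors in `D`. -/
noncomputable def SP (K : Type) [Field K] (n : ℕ) (D : Set (Fin n → ℕ)) :
    Submodule K (MvPolynomial (Fin n) K) :=
  Submodule.span K (mono K n '' D)

lemma SP_eq_span_B (n : ℕ) (D : Set (Fin n → ℕ)) :
    SP K n D = Submodule.span K (B K n '' D) := by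
  unfold SP
  congr 1
  exact Set.image_congr fun d _ => (B_apply n d).symm

lemma mem_SP {n : ℕ} {D : Set (Fin n → ℕ)} {p : MvPolynomial (Fin n) K} :
    p ∈ SP K n D ↔ ↑((B K n).repr p).support ⊆ D := by
  rw [SP_eq_span_B]
  exact (B K n).mem_span_image

lemma mono_mem_SP {n : ℕ} {D : Set (Fin n → ℕ)} {d : Fin n → ℕ} :
    mono K n d ∈ SP K n D ↔ d ∈ D := by
  rw [← B_apply, mem_SP, Module.Basis.repr_self]
  rw [Finsupp.support_single_ne_zero d one_ne_zero]
  simp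

lemma SP_mono {n : ℕ} {D D' : Set (Fin n → ℕ)} (h : D ⊆ D') :
    SP K n D ≤ SP K n D' :=
  Submodule.span_mono (Set.image_mono h)

lemma SP_iUnion {n : ℕ} {ι : Sort*} (D : ι → Set (Fin n → ℕ)) :
    SP K n (⋃ i, D i) = ⨆ i, SP K n (D i) := by
  unfold SP
  rw [Set.image_iUnion, Submodule.span_iUnion]

lemma SP_union {n : ℕ} (D D' : Set (Fin n → ℕ)) :
    SP K n (D ∪ D') = SP K n D ⊔ SP K n D' := by
  unfold SP
  rw [Set.image_union, Submodule.span_union]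

lemma SP_univ {n : ℕ} : SP K n (Set.univ) = ⊤ := by
  rw [SP_eq_span_B, Set.image_univ]
  exact (B K n).span_eq

lemma SP_disjoint {n : ℕ} {D D' : Set (Fin n → ℕ)} (h : Disjoint D D') :
    Disjoint (SP K n D) (SP K n D') := by
  rw [Submodule.disjoint_def]
  intro x hx hx'
  rw [mem_SP] at hx hx'
  have : ((B K n).repr x).support = ∅ := by
    have := Set.subset_inter hx hx'
    rw [Set.disjoint_iff_inter_eq_empty.1 h] at this
    simpa using Set.subset_empty_iff.1 this
  have : (B K n).repr x = 0 := Finsupp.support_eq_empty.1 this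
  have := congrArg ((B K n).repr.symm) this
  simpa using this

lemma mono_mul_mono {n : ℕ} (d e : Fin n → ℕ) :
    mono K n d * mono K n e = mono K n (d + e) := by
  have h : Finsupp.equivFunOnFinite.symm (d + e)
      = Finsupp.equivFunOnFinite.symm d + Finsupp.equivFunOnFinite.symm e := by
    ext i; simp
  unfold mono
  rw [MvPolynomial.monomial_mul, one_mul, h]

/-- A monomial ideal generated by an upward closed set of exponent vectors is,
as a `K`-subspace, the span of those monomials. -/
lemma restrictScalars_span_mono_eq (n : ℕ) (T : Set (Fin n → ℕ))
    (hT : ∀ d ∈ T, ∀ e, d + e ∈ T) :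
    Submodule.restrictScalars K (Ideal.span (mono K n '' T)) = SP K n T := by
  apply le_antisymm
  · intro p hp
    have hp' : p ∈ Ideal.span (mono K n '' T) := hp
    -- closure of SP T under multiplication
    have key : ∀ q ∈ SP K n T, ∀ r : MvPolynomial (Fin n) K, r * q ∈ SP K n T := by
      intro q hq
      refine Submodule.span_induction (p := fun q _ => ∀ r, r * q ∈ SP K n T)
        ?_ ?_ ?_ ?_ hq
      · rintro _ ⟨d, hd, rfl⟩ r
        have hr : r ∈ (⊤ : Submodule K (MvPolynomial (Fin n) K)) := trivial
        rw [← SP_univ (K := K) (n := n)] at hr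
        refine Submodule.span_induction (p := fun r _ => r * mono K n d ∈ SP K n T)
          ?_ ?_ ?_ ?_ hr
        · rintro _ ⟨e, -, rfl⟩
          rw [mono_mul_mono]
          exact (mono_mem_SP).2 (by simpa [add_comm] using hT d hd e)
        · simp
        · intro x y _ _ hx hy
          rw [add_mul]; exact add_mem hx hy
        · intro c x _ hx
          rw [smul_mul_assoc]; exact Submodule.smul_mem _ _ hx
      · intro r; simp
      · intro x y _ _ hx hy r
        rw [mul_add]; exact add_mem (hx r) (hy r)
      · intro c x _ hx r
        rw [mul_smul_comm]; exact Submodule.smul_mem _ _ (hx r)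
    refine Submodule.span_induction (p := fun q _ => q ∈ SP K n T) ?_ ?_ ?_ ?_ hp'
    · rintro _ ⟨d, hd, rfl⟩
      exact (mono_mem_SP).2 hd
    · simp
    · intro x y _ _ hx hy; exact add_mem hx hy
    · intro r x _ hx
      exact key x hx r
  · unfold SP
    rw [Submodule.span_le]
    rintro _ ⟨d, hd, rfl⟩
    exact Ideal.subset_span ⟨d, hd, rfl⟩

/-- If a `K`-linear map sends basis monomials to basis monomials along `g`,
then the repr of the image is the `mapDomain` of the repr. -/
lemma repr_comm {n n' : ℕ}
    (f : MvPolynomial (Fin n) K →ₗ[K] MvPolynomial (Fin n') K)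
    (g : (Fin n → ℕ) → (Fin n' → ℕ)) (hfg : ∀ d, f (mono K n d) = mono K n' (g d))
    (p : MvPolynomial (Fin n) K) :
    (B K n').repr (f p) = Finsupp.mapDomain g ((B K n).repr p) := by
  have h : ((B K n').repr.toLinearMap.comp f)
      = (Finsupp.lmapDomain K K g).comp (B K n).repr.toLinearMap := by
    apply (B K n).ext
    intro d
    simp only [LinearMap.comp_apply, LinearEquiv.coe_toLinearMap, Module.Basis.repr_self,
      Finsupp.lmapDomain_apply, Finsupp.mapDomain_single]
    rw [B_apply, hfg d, ← B_apply, Module.Basis.repr_self]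
  exact congrFun (congrArg DFunLike.coe h) p

lemma supp_image {n n' : ℕ}
    (f : MvPolynomial (Fin n) K →ₗ[K] MvPolynomial (Fin n') K)
    (g : (Fin n → ℕ) → (Fin n' → ℕ)) (hg : Function.Injective g)
    (hfg : ∀ d, f (mono K n d) = mono K n' (g d)) (p : MvPolynomial (Fin n) K) :
    (((B K n').repr (f p)).support : Set (Fin n' → ℕ))
      = g '' (((B K n).repr p).support : Set (Fin n → ℕ)) := by
  classical
  rw [repr_comm f g hfg, Finsupp.mapDomain_support_of_injective hg]
  simp

lemma map_mem_SP_iff {n n' : ℕ}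
    (f : MvPolynomial (Fin n) K →ₗ[K] MvPolynomial (Fin n') K)
    (g : (Fin n → ℕ) → (Fin n' → ℕ)) (hg : Function.Injective g)
    (hfg : ∀ d, f (mono K n d) = mono K n' (g d))
    {T : Set (Fin n' → ℕ)} {p : MvPolynomial (Fin n) K} :
    f p ∈ SP K n' T ↔ p ∈ SP K n (g ⁻¹' T) := by
  rw [mem_SP, mem_SP, supp_image f g hg hfg, Set.image_subset_iff]

/-- The set of exponent vectors of monomials belonging to an ideal. -/
def Tset (K : Type) [Field K] (n : ℕ) (J : Ideal (MvPolynomial (Fin n) K)) :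
    Set (Fin n → ℕ) := {d | mono K n d ∈ J}

lemma restrictScalars_eq_SP_Tset {n : ℕ} {J : Ideal (MvPolynomial (Fin n) K)}
    (hJ : IsMonomialIdeal K n J) :
    Submodule.restrictScalars K J = SP K n (Tset K n J) := by
  have h2 : ∀ d ∈ Tset K n J, ∀ e, d + e ∈ Tset K n J := by
    intro d hd e
    show mono K n (d + e) ∈ J
    rw [← mono_mul_mono]
    exact Ideal.mul_mem_right _ _ hd
  have h1 : J = Ideal.span (mono K n '' Tset K n J) := hJ
  calc Submodule.restrictScalars K J
      = Submodule.restrictScalars K (Ideal.span (mono K n '' Tset K n J)) := by rw [← h1]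
    _ = SP K n (Tset K n J) := restrictScalars_span_mono_eq n _ h2

section Specific

variable (m : ℕ)

/-- Exponent shift `d ↦ d + e₀`. -/
def shf (d : Fin (m + 1) → ℕ) : Fin (m + 1) → ℕ := d + Pi.single 0 1

/-- Extension of an exponent vector by `0` in position `0`. -/
def cons0 (b : Fin m → ℕ) : Fin (m + 1) → ℕ := Fin.cons 0 b

lemma shf_injective : Function.Injective (shf m) := fun d d' h => by
  simpa [shf] using add_left_injective (Pi.single 0 1) h

lemma cons0_injective : Function.Injective (cons0 m) := by
  intro b b' h
  funext i
  have := congrFun h i.succ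
  simpa [cons0] using this

lemma rename_mono (b : Fin m → ℕ) :
    (MvPolynomial.rename (Fin.succ) : MvPolynomial (Fin m) K →ₐ[K]
        MvPolynomial (Fin (m+1)) K) (mono K m b) = mono K (m+1) (cons0 m b) := by
  have h : Finsupp.mapDomain Fin.succ (Finsupp.equivFunOnFinite.symm b)
      = Finsupp.equivFunOnFinite.symm (cons0 m b) := by
    ext i
    refine Fin.cases ?_ (fun j => ?_) i
    · rw [Finsupp.mapDomain_notin_range]
      · simp [cons0]
      · rintro ⟨j, hj⟩
        exact (Fin.succ_ne_zero j) hj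
    · rw [Finsupp.mapDomain_apply (Fin.succ_injective m)]
      simp [cons0]
  unfold mono
  rw [MvPolynomial.rename_monomial, h]

lemma mul_X0_mono (d : Fin (m+1) → ℕ) :
    mono K (m+1) d * X 0 = mono K (m+1) (shf m d) := by
  have hX : (X 0 : MvPolynomial (Fin (m+1)) K)
      = MvPolynomial.monomial (Finsupp.single 0 1) 1 := rfl
  have h : Finsupp.equivFunOnFinite.symm d + Finsupp.single 0 1
      = Finsupp.equivFunOnFinite.symm (shf m d) := by
    ext i
    simp [shf, Finsupp.single_apply, Pi.single_apply, eq_comm]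
  unfold mono
  rw [hX, MvPolynomial.monomial_mul, one_mul, h]

variable (I : Ideal (MvPolynomial (Fin (m+1)) K))

lemma Tset_comap :
    Tset K m (Ideal.comap (MvPolynomial.rename (Fin.succ) :
        MvPolynomial (Fin m) K →ₐ[K] MvPolynomial (Fin (m + 1)) K) I)
      = cons0 m ⁻¹' Tset K (m+1) I := by
  ext b
  show mono K m b ∈ Ideal.comap _ I ↔ mono K (m+1) (cons0 m b) ∈ I
  rw [Ideal.mem_comap, rename_mono]

lemma Tset_colon :
    Tset K (m+1) (Submodule.colon I (Ideal.span {(X 0 : MvPolynomial (Fin (m+1)) K)}))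
      = shf m ⁻¹' Tset K (m+1) I := by
  ext d
  show mono K (m+1) d ∈ Submodule.colon I _ ↔ mono K (m+1) (shf m d) ∈ I
  rw [← mul_X0_mono, Ideal.mem_colon_span_singleton]

lemma restrictScalars_comap (hT : Submodule.restrictScalars K I = SP K (m+1) (Tset K (m+1) I)) :
    Submodule.restrictScalars K (Ideal.comap (MvPolynomial.rename (Fin.succ) :
        MvPolynomial (Fin m) K →ₐ[K] MvPolynomial (Fin (m + 1)) K) I)
      = SP K m (Tset K m (Ideal.comap (MvPolynomial.rename (Fin.succ) :
          MvPolynomial (Fin m) K →ₐ[K] MvPolynomial (Fin (m + 1)) K) I)) := by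
  have hmem : ∀ q, q ∈ I ↔ q ∈ SP K (m+1) (Tset K (m+1) I) := by
    intro q
    rw [← hT]
    rfl
  ext p
  rw [Tset_comap]
  calc p ∈ Submodule.restrictScalars K (Ideal.comap (MvPolynomial.rename (Fin.succ) :
        MvPolynomial (Fin m) K →ₐ[K] MvPolynomial (Fin (m + 1)) K) I)
      ↔ (MvPolynomial.rename (Fin.succ) : MvPolynomial (Fin m) K →ₐ[K]
          MvPolynomial (Fin (m + 1)) K) p ∈ I := Ideal.mem_comap
    _ ↔ _ ∈ SP K (m+1) (Tset K (m+1) I) := hmem _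
    _ ↔ p ∈ SP K m (cons0 m ⁻¹' Tset K (m+1) I) :=
        map_mem_SP_iff ((MvPolynomial.rename (Fin.succ) : MvPolynomial (Fin m) K →ₐ[K]
          MvPolynomial (Fin (m + 1)) K)).toLinearMap (cons0 m) (cons0_injective m)
          (rename_mono m)

lemma restrictScalars_colon (hT : Submodule.restrictScalars K I = SP K (m+1) (Tset K (m+1) I)) :
    Submodule.restrictScalars K
        (Submodule.colon I (Ideal.span {(X 0 : MvPolynomial (Fin (m+1)) K)}))
      = SP K (m+1) (Tset K (m+1)
          (Submodule.colon I (Ideal.span {(X 0 : MvPolynomial (Fin (m+1)) K)}))) := by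
  have hmem : ∀ q, q ∈ I ↔ q ∈ SP K (m+1) (Tset K (m+1) I) := by
    intro q
    rw [← hT]
    rfl
  ext p
  rw [Tset_colon]
  calc p ∈ Submodule.restrictScalars K
        (Submodule.colon I (Ideal.span {(X 0 : MvPolynomial (Fin (m+1)) K)}))
      ↔ p * X 0 ∈ I := Ideal.mem_colon_span_singleton
    _ ↔ p * X 0 ∈ SP K (m+1) (Tset K (m+1) I) := hmem _
    _ ↔ p ∈ SP K (m+1) (shf m ⁻¹' Tset K (m+1) I) :=
        map_mem_SP_iff (LinearMap.mulRight K (X 0 : MvPolynomial (Fin (m+1)) K)) (shf m)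
          (shf_injective m) (fun d => mul_X0_mono m d)

end Specific

/-- The exponent set of a Stanley space. -/
def Eset (n : ℕ) (a : Fin n → ℕ) (Z : Finset (Fin n)) : Set (Fin n → ℕ) :=
  (a + ·) '' {e | ∀ j, j ∉ Z → e j = 0}

lemma stanleySpace_eq_SP (n : ℕ) (a : Fin n → ℕ) (Z : Finset (Fin n)) :
    stanleySpace K n a Z = SP K n (Eset n a Z) := by
  unfold stanleySpace SP Eset
  rw [Set.image_image]

/-- The family of exponent sets associated to a Stanley decomposition of `S/J`. -/
def Dfam (K : Type) [Field K] (n : ℕ) (J : Ideal (MvPolynomial (Fin n) K)) (t : ℕ)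
    (a : Fin t → (Fin n → ℕ)) (Z : Fin t → Finset (Fin n)) :
    Option (Fin t) → Set (Fin n → ℕ) :=
  fun o => o.elim (Tset K n J) (fun i => Eset n (a i) (Z i))

lemma isSD_iff_partition {n : ℕ} {J : Ideal (MvPolynomial (Fin n) K)}
    (hT : Submodule.restrictScalars K J = SP K n (Tset K n J))
    {t : ℕ} (a : Fin t → (Fin n → ℕ)) (Z : Fin t → Finset (Fin n)) :
    IsStanleyDecOfQuot K n J t a Z ↔
      ((∀ c (o₁ o₂ : Option (Fin t)), c ∈ Dfam K n J t a Z o₁ →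
          c ∈ Dfam K n J t a Z o₂ → o₁ = o₂)
        ∧ (⋃ o, Dfam K n J t a Z o) = Set.univ) := by
  have hfam : (fun o : Option (Fin t) => o.elim (Submodule.restrictScalars K J)
      (fun i => stanleySpace K n (a i) (Z i))) = fun o => SP K n (Dfam K n J t a Z o) := by
    funext o
    cases o with
    | none => exact hT
    | some i => exact stanleySpace_eq_SP n (a i) (Z i)
  unfold IsStanleyDecOfQuot
  rw [hfam]
  constructor
  · rintro ⟨hind, htop⟩
    constructor
    · intro c o₁ o₂ h1 h2
      by_contra hne
      have hd := hind.pairwiseDisjoint hne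
      have hm1 : mono K n c ∈ SP K n (Dfam K n J t a Z o₁) := mono_mem_SP.2 h1
      have hm2 : mono K n c ∈ SP K n (Dfam K n J t a Z o₂) := mono_mem_SP.2 h2
      have h0 : mono K n c = 0 := Submodule.disjoint_def.1 hd _ hm1 hm2
      exact (B K n).ne_zero c (by rw [B_apply]; exact h0)
    · apply Set.eq_univ_iff_forall.2
      intro c
      have h1 : mono K n c ∈ (⊤ : Submodule K (MvPolynomial (Fin n) K)) := trivial
      rw [← htop, ← SP_iUnion] at h1
      exact mono_mem_SP.1 h1
  · rintro ⟨huniq, hcov⟩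
    constructor
    · intro o
      have h1 : (⨆ o', ⨆ _ : o' ≠ o, SP K n (Dfam K n J t a Z o'))
          ≤ SP K n (⋃ o' ∈ {x | x ≠ o}, Dfam K n J t a Z o') :=
        iSup₂_le fun o' ho' => SP_mono (Set.subset_biUnion_of_mem (u := fun o' =>
          Dfam K n J t a Z o') ho')
      have h2 : Disjoint (Dfam K n J t a Z o) (⋃ o' ∈ {x | x ≠ o}, Dfam K n J t a Z o') := by
        rw [Set.disjoint_left]
        intro c hc hmem
        obtain ⟨o', ho', hco'⟩ := Set.mem_iUnion₂.1 hmem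
        exact ho' (huniq c o' o hco' hc)
      exact (SP_disjoint h2).mono_right h1
    · calc (⨆ o, SP K n (Dfam K n J t a Z o)) = SP K n (⋃ o, Dfam K n J t a Z o) :=
            (SP_iUnion _).symm
        _ = ⊤ := by rw [hcov]; exact SP_univ

section Transfer

variable (m : ℕ)

lemma Eset_cons0 (b : Fin m → ℕ) (Z : Finset (Fin m)) :
    Eset (m+1) (cons0 m b) (Z.image Fin.succ) = cons0 m '' Eset m b Z := by
  ext c
  constructor
  · rintro ⟨f, hf, rfl⟩
    have hf0 : f 0 = 0 := by
      apply hf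
      simp only [Finset.mem_image]
      rintro ⟨z, hz, hzz⟩
      exact Fin.succ_ne_zero z hzz
    refine ⟨b + fun j => f j.succ, ⟨fun j => f j.succ, ?_, rfl⟩, ?_⟩
    · intro j hj
      apply hf
      simp only [Finset.mem_image]
      rintro ⟨z, hz, hzz⟩
      exact hj (by rwa [Fin.succ_injective m hzz] at hz)
    · show cons0 m (b + fun j => f j.succ) = (fun x => cons0 m b + x) f
      funext i
      refine Fin.cases ?_ (fun j => ?_) i
      · show (Fin.cons 0 (b + fun j => f j.succ) : Fin (m+1) → ℕ) 0
          = cons0 m b 0 + f 0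
        rw [Fin.cons_zero, hf0]
        simp [cons0]
      · show (Fin.cons 0 (b + fun j => f j.succ) : Fin (m+1) → ℕ) j.succ
          = cons0 m b j.succ + f j.succ
        rw [Fin.cons_succ]
        simp [cons0]
  · rintro ⟨y, ⟨e, he, rfl⟩, rfl⟩
    refine ⟨Fin.cons 0 e, ?_, ?_⟩
    · intro j hj
      revert hj
      refine Fin.cases ?_ (fun k => ?_) j
      · intro _
        exact Fin.cons_zero _ _
      · intro hk
        rw [Fin.cons_succ]
        exact he k (fun hkZ => hk (Finset.mem_image_of_mem _ hkZ))
    · show (fun x => cons0 m b + x) (Fin.cons 0 e) = cons0 m ((fun x => b + x) e)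
      funext i
      refine Fin.cases ?_ (fun j => ?_) i
      · show cons0 m b 0 + (Fin.cons 0 e : Fin (m+1) → ℕ) 0
          = (Fin.cons 0 (b + e) : Fin (m+1) → ℕ) 0
        rw [Fin.cons_zero, Fin.cons_zero]
        simp [cons0]
      · show cons0 m b j.succ + (Fin.cons 0 e : Fin (m+1) → ℕ) j.succ
          = (Fin.cons 0 (b + e) : Fin (m+1) → ℕ) j.succ
        rw [Fin.cons_succ, Fin.cons_succ]
        simp [cons0]

lemma Eset_shf (d : Fin (m+1) → ℕ) (Z : Finset (Fin (m+1))) :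
    Eset (m+1) (shf m d) Z = shf m '' Eset (m+1) d Z := by
  unfold Eset
  rw [Set.image_image]
  exact Set.image_congr' (fun e => by
    show shf m d + e = shf m (d + e)
    unfold shf
    exact add_right_comm d (Pi.single 0 1) e)

lemma cons0_tail (c : Fin (m+1) → ℕ) (h : c 0 = 0) :
    cons0 m (fun j => c j.succ) = c := by
  funext i
  refine Fin.cases ?_ (fun j => ?_) i
  · show (Fin.cons 0 (fun j => c j.succ) : Fin (m+1) → ℕ) 0 = c 0
    rw [Fin.cons_zero, h]
  · show (Fin.cons 0 (fun j => c j.succ) : Fin (m+1) → ℕ) j.succ = c j.succ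
    rw [Fin.cons_succ]

lemma shf_unshift (c : Fin (m+1) → ℕ) (h : 0 < c 0) :
    shf m (fun i => c i - (Pi.single 0 1 : Fin (m+1) → ℕ) i) = c := by
  funext i
  show (c i - (Pi.single 0 1 : Fin (m+1) → ℕ) i) + (Pi.single 0 1 : Fin (m+1) → ℕ) i = c i
  by_cases hi : i = 0
  · subst hi
    rw [Pi.single_eq_same]
    omega
  · rw [Pi.single_eq_of_ne hi]
    omega

lemma mem_range_cons0_zero (b : Fin m → ℕ) : cons0 m b 0 = 0 := Fin.cons_zero _ _

lemma mem_range_shf_pos (d : Fin (m+1) → ℕ) : 0 < shf m d 0 := by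
  show 0 < d 0 + (Pi.single 0 1 : Fin (m+1) → ℕ) 0
  rw [Pi.single_eq_same]
  omega

end Transfer

section Combine

variable (m : ℕ) (I : Ideal (MvPolynomial (Fin (m+1)) K))

set_option maxHeartbeats 1600000 in
lemma combine
    (hT : Submodule.restrictScalars K I = SP K (m+1) (Tset K (m+1) I))
    {t' t'' : ℕ} {a' : Fin t' → (Fin m → ℕ)} {Z' : Fin t' → Finset (Fin m)}
    {a'' : Fin t'' → (Fin (m+1) → ℕ)} {Z'' : Fin t'' → Finset (Fin (m+1))}
    (hsd' : IsStanleyDecOfQuot K m (Ideal.comap (MvPolynomial.rename (Fin.succ) :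
        MvPolynomial (Fin m) K →ₐ[K] MvPolynomial (Fin (m + 1)) K) I) t' a' Z')
    (hsd'' : IsStanleyDecOfQuot K (m+1)
        (Submodule.colon I (Ideal.span {(X 0 : MvPolynomial (Fin (m+1)) K)})) t'' a'' Z'') :
    IsStanleyDecOfQuot K (m+1) I (t' + t'')
      (Fin.addCases (fun i => cons0 m (a' i)) (fun j => shf m (a'' j)))
      (Fin.addCases (fun i => (Z' i).image Fin.succ) (fun j => Z'' j)) := by
  have hT' := restrictScalars_comap m I hT
  have hT'' := restrictScalars_colon m I hT
  rw [isSD_iff_partition hT'] at hsd'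
  rw [isSD_iff_partition hT''] at hsd''
  obtain ⟨hu', hc'⟩ := hsd'
  obtain ⟨hu'', hc''⟩ := hsd''
  rw [isSD_iff_partition hT]
  set I' := Ideal.comap (MvPolynomial.rename (Fin.succ) :
      MvPolynomial (Fin m) K →ₐ[K] MvPolynomial (Fin (m + 1)) K) I with hI'def
  set I'' := Submodule.colon I (Ideal.span {(X 0 : MvPolynomial (Fin (m+1)) K)}) with hI''def
  set AA : Fin (t' + t'') → (Fin (m+1) → ℕ) :=
    Fin.addCases (fun i => cons0 m (a' i)) (fun j => shf m (a'' j)) with hAA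
  set ZZ : Fin (t' + t'') → Finset (Fin (m+1)) :=
    Fin.addCases (fun i => (Z' i).image Fin.succ) (fun j => Z'' j) with hZZ
  have hTc : Tset K m I' = cons0 m ⁻¹' Tset K (m+1) I := Tset_comap m I
  have hTcc : Tset K (m+1) I'' = shf m ⁻¹' Tset K (m+1) I := Tset_colon m I
  have hDleft : ∀ i : Fin t',
      Dfam K (m+1) I (t'+t'') AA ZZ (some (Fin.castAdd t'' i))
        = cons0 m '' Dfam K m I' t' a' Z' (some i) := by
    intro i
    show Eset (m+1) (AA (Fin.castAdd t'' i)) (ZZ (Fin.castAdd t'' i)) = _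
    rw [hAA, hZZ]
    simp only [Fin.addCases_left]
    exact Eset_cons0 m (a' i) (Z' i)
  have hDright : ∀ j : Fin t'',
      Dfam K (m+1) I (t'+t'') AA ZZ (some (Fin.natAdd t' j))
        = shf m '' Dfam K (m+1) I'' t'' a'' Z'' (some j) := by
    intro j
    show Eset (m+1) (AA (Fin.natAdd t' j)) (ZZ (Fin.natAdd t' j)) = _
    rw [hAA, hZZ]
    simp only [Fin.addCases_right]
    exact Eset_shf m (a'' j) (Z'' j)
  clear_value AA ZZ I' I''
  clear hAA hZZ hI'def hI''def hT hT' hT''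
  -- membership transfer, zero case
  have hL : ∀ (c : Fin (m+1) → ℕ), c 0 = 0 → ∀ o : Option (Fin (t' + t'')),
      c ∈ Dfam K (m+1) I (t'+t'') AA ZZ o →
      ∃ o', o = Option.map (Fin.castAdd t'') o'
        ∧ (fun j => c j.succ) ∈ Dfam K m I' t' a' Z' o' := by
    intro c h0 o hc
    cases o with
    | none =>
      refine ⟨none, rfl, ?_⟩
      rw [show Dfam K m I' t' a' Z' none = Tset K m I' from rfl]
      rw [hTc]
      show cons0 m (fun j => c j.succ) ∈ Tset K (m+1) I
      rw [cons0_tail m c h0]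
      exact hc
    | some i =>
      revert hc
      refine Fin.addCases (motive := fun i =>
        c ∈ Dfam K (m+1) I (t'+t'') AA ZZ (some i) →
        ∃ o', some i = Option.map (Fin.castAdd t'') o'
          ∧ (fun j => c j.succ) ∈ Dfam K m I' t' a' Z' o') ?_ ?_ i
      · intro i hc
        rw [hDleft i] at hc
        obtain ⟨b, hb, hbc⟩ := hc
        have hbe : b = fun j => c j.succ :=
          cons0_injective m (hbc.trans (cons0_tail m c h0).symm)
        exact ⟨some i, rfl, hbe ▸ hb⟩
      · intro j hc
        rw [hDright j] at hc
        obtain ⟨d, hd, hdc⟩ := hc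
        have := mem_range_shf_pos m d
        rw [hdc, h0] at this
        omega
  -- membership transfer, positive case
  have hR : ∀ (c : Fin (m+1) → ℕ), 0 < c 0 → ∀ o : Option (Fin (t' + t'')),
      c ∈ Dfam K (m+1) I (t'+t'') AA ZZ o →
      ∃ o'', o = Option.map (Fin.natAdd t') o''
        ∧ (fun i => c i - (Pi.single 0 1 : Fin (m+1) → ℕ) i)
            ∈ Dfam K (m+1) I'' t'' a'' Z'' o'' := by
    intro c h0 o hc
    cases o with
    | none =>
      refine ⟨none, rfl, ?_⟩
      show (fun i => c i - (Pi.single 0 1 : Fin (m+1) → ℕ) i) ∈ Tset K (m+1) I''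
      rw [hTcc]
      show shf m (fun i => c i - (Pi.single 0 1 : Fin (m+1) → ℕ) i) ∈ Tset K (m+1) I
      rw [shf_unshift m c h0]
      exact hc
    | some i =>
      revert hc
      refine Fin.addCases (motive := fun i =>
        c ∈ Dfam K (m+1) I (t'+t'') AA ZZ (some i) →
        ∃ o'', some i = Option.map (Fin.natAdd t') o''
          ∧ (fun i => c i - (Pi.single 0 1 : Fin (m+1) → ℕ) i)
              ∈ Dfam K (m+1) I'' t'' a'' Z'' o'') ?_ ?_ i
      · intro i hc
        rw [hDleft i] at hc
        obtain ⟨b, hb, hbc⟩ := hc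
        have := mem_range_cons0_zero m b
        rw [hbc] at this
        omega
      · intro j hc
        rw [hDright j] at hc
        obtain ⟨d, hd, hdc⟩ := hc
        have hde : d = fun i => c i - (Pi.single 0 1 : Fin (m+1) → ℕ) i :=
          shf_injective m (hdc.trans (shf_unshift m c h0).symm)
        exact ⟨some j, rfl, hde ▸ hd⟩
  -- converse transfers
  have hLr : ∀ (c : Fin (m+1) → ℕ), c 0 = 0 → ∀ o' : Option (Fin t'),
      (fun j => c j.succ) ∈ Dfam K m I' t' a' Z' o' →
      c ∈ Dfam K (m+1) I (t'+t'') AA ZZ (Option.map (Fin.castAdd t'') o') := by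
    intro c h0 o' hc
    cases o' with
    | none =>
      show c ∈ Tset K (m+1) I
      have : cons0 m (fun j => c j.succ) ∈ Tset K (m+1) I := by
        have hc2 : (fun j => c j.succ) ∈ Tset K m I' := hc
        rw [hTc] at hc2
        exact hc2
      rwa [cons0_tail m c h0] at this
    | some i =>
      show c ∈ Dfam K (m+1) I (t'+t'') AA ZZ (some (Fin.castAdd t'' i))
      rw [hDleft i]
      exact ⟨fun j => c j.succ, hc, cons0_tail m c h0⟩
  have hRr : ∀ (c : Fin (m+1) → ℕ), 0 < c 0 → ∀ o'' : Option (Fin t''),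
      (fun i => c i - (Pi.single 0 1 : Fin (m+1) → ℕ) i) ∈ Dfam K (m+1) I'' t'' a'' Z'' o'' →
      c ∈ Dfam K (m+1) I (t'+t'') AA ZZ (Option.map (Fin.natAdd t') o'') := by
    intro c h0 o'' hc
    cases o'' with
    | none =>
      show c ∈ Tset K (m+1) I
      have : shf m (fun i => c i - (Pi.single 0 1 : Fin (m+1) → ℕ) i) ∈ Tset K (m+1) I := by
        have hc2 : (fun i => c i - (Pi.single 0 1 : Fin (m+1) → ℕ) i) ∈ Tset K (m+1) I'' := hc
        rw [hTcc] at hc2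
        exact hc2
      rwa [shf_unshift m c h0] at this
    | some j =>
      show c ∈ Dfam K (m+1) I (t'+t'') AA ZZ (some (Fin.natAdd t' j))
      rw [hDright j]
      exact ⟨fun i => c i - (Pi.single 0 1 : Fin (m+1) → ℕ) i, hc, shf_unshift m c h0⟩
  constructor
  · -- uniqueness
    intro c o₁ o₂ h1 h2
    rcases Nat.eq_zero_or_pos (c 0) with h0 | h0
    · obtain ⟨p₁, rfl, hm1⟩ := hL c h0 o₁ h1
      obtain ⟨p₂, rfl, hm2⟩ := hL c h0 o₂ h2
      rw [hu' _ p₁ p₂ hm1 hm2]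
    · obtain ⟨p₁, rfl, hm1⟩ := hR c h0 o₁ h1
      obtain ⟨p₂, rfl, hm2⟩ := hR c h0 o₂ h2
      rw [hu'' _ p₁ p₂ hm1 hm2]
  · -- cover
    apply Set.eq_univ_iff_forall.2
    intro c
    rcases Nat.eq_zero_or_pos (c 0) with h0 | h0
    · have hmem : (fun j => c j.succ) ∈ ⋃ o, Dfam K m I' t' a' Z' o := by
        rw [hc']
        trivial
      obtain ⟨o', ho'⟩ := Set.mem_iUnion.1 hmem
      exact Set.mem_iUnion.2 ⟨_, hLr c h0 o' ho'⟩
    · have hmem : (fun i => c i - (Pi.single 0 1 : Fin (m+1) → ℕ) i)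
          ∈ ⋃ o, Dfam K (m+1) I'' t'' a'' Z'' o := by
        rw [hc'']
        trivial
      obtain ⟨o'', ho''⟩ := Set.mem_iUnion.1 hmem
      exact Set.mem_iUnion.2 ⟨_, hRr c h0 o'' ho''⟩

end Combine

noncomputable def quotEquivSP (n : ℕ) (J : Ideal (MvPolynomial (Fin n) K))
    (hT : Submodule.restrictScalars K J = SP K n (Tset K n J)) :
    (MvPolynomial (Fin n) K ⧸ J) ≃ₗ[K] SP K n ((Tset K n J)ᶜ) := by
  refine (Submodule.Quotient.restrictScalarsEquiv K J).symm.trans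
    ((Submodule.quotEquivOfEq _ _ hT).trans
      (Submodule.quotientEquivOfIsCompl _ _ ?_))
  constructor
  · exact SP_disjoint disjoint_compl_right
  · rw [codisjoint_iff, ← SP_union, Set.union_compl_self]
    exact SP_univ

noncomputable def SPprodEquiv (n : ℕ) (D1 D2 : Set (Fin n → ℕ)) (h : Disjoint D1 D2) :
    (SP K n D1 × SP K n D2) ≃ₗ[K] SP K n (D1 ∪ D2) := by
  have hinj : Function.Injective ((SP K n D1).subtype.coprod (SP K n D2).subtype) := by
    rw [← LinearMap.ker_eq_bot, Submodule.eq_bot_iff]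
    rintro ⟨x, y⟩ hxy
    rw [LinearMap.mem_ker] at hxy
    have hxy' : (x : MvPolynomial (Fin n) K) + (y : MvPolynomial (Fin n) K) = 0 := by
      simpa using hxy
    have hx2 : (x : MvPolynomial (Fin n) K) ∈ SP K n D1 ⊓ SP K n D2 := by
      refine ⟨x.2, ?_⟩
      have hxe : (x : MvPolynomial (Fin n) K) = -(y : MvPolynomial (Fin n) K) :=
        eq_neg_of_add_eq_zero_left hxy'
      rw [hxe]
      exact neg_mem y.2
    rw [(SP_disjoint h).eq_bot] at hx2
    have hx0 : (x : MvPolynomial (Fin n) K) = 0 := hx2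
    have hy0 : (y : MvPolynomial (Fin n) K) = 0 := by
      rw [hx0] at hxy'
      simpa using hxy'
    exact Prod.ext (Subtype.ext hx0) (Subtype.ext hy0)
  exact (LinearEquiv.ofInjective _ hinj).trans (LinearEquiv.ofEq _ _ (by
    rw [LinearMap.range_coprod, Submodule.range_subtype, Submodule.range_subtype, ← SP_union]))

noncomputable def SPmapEquiv {n n' : ℕ}
    (f : MvPolynomial (Fin n) K →ₗ[K] MvPolynomial (Fin n') K) (hf : Function.Injective f)
    (g : (Fin n → ℕ) → (Fin n' → ℕ)) (hfg : ∀ d, f (mono K n d) = mono K n' (g d))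
    (D : Set (Fin n → ℕ)) : SP K n D ≃ₗ[K] SP K n' (g '' D) :=
  (Submodule.equivMapOfInjective f hf (SP K n D)).trans (LinearEquiv.ofEq _ _ (by
    unfold SP
    rw [Submodule.map_span, Set.image_image, Set.image_image]
    exact congrArg (Submodule.span K) (Set.image_congr' fun d => hfg d)))

section MainEquiv

variable (m : ℕ) (I : Ideal (MvPolynomial (Fin (m+1)) K))

lemma compl_split :
    (Tset K (m+1) I)ᶜ
      = cons0 m '' (Tset K m (Ideal.comap (MvPolynomial.rename (Fin.succ) :
            MvPolynomial (Fin m) K →ₐ[K] MvPolynomial (Fin (m + 1)) K) I))ᶜ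
        ∪ shf m '' (Tset K (m+1) (Submodule.colon I
            (Ideal.span {(X 0 : MvPolynomial (Fin (m+1)) K)})))ᶜ := by
  have hTc := Tset_comap m I
  have hTcc := Tset_colon m I
  ext c
  constructor
  · intro hc
    rcases Nat.eq_zero_or_pos (c 0) with h0 | h0
    · refine Or.inl ⟨fun j => c j.succ, ?_, cons0_tail m c h0⟩
      intro hb
      rw [hTc] at hb
      have h2 : cons0 m (fun j => c j.succ) ∈ Tset K (m+1) I := hb
      rw [cons0_tail m c h0] at h2
      exact hc h2
    · refine Or.inr ⟨fun i => c i - (Pi.single 0 1 : Fin (m+1) → ℕ) i, ?_, shf_unshift m c h0⟩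
      intro hd
      rw [hTcc] at hd
      have h2 : shf m (fun i => c i - (Pi.single 0 1 : Fin (m+1) → ℕ) i) ∈ Tset K (m+1) I := hd
      rw [shf_unshift m c h0] at h2
      exact hc h2
  · rintro (⟨b, hb, rfl⟩ | ⟨d, hd, rfl⟩) <;> intro hcT
    · apply hb
      rw [hTc]
      exact hcT
    · apply hd
      rw [hTcc]
      exact hcT

lemma compl_disjoint (U1 : Set (Fin m → ℕ)) (U2 : Set (Fin (m+1) → ℕ)) :
    Disjoint (cons0 m '' U1) (shf m '' U2) := by
  rw [Set.disjoint_left]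
  rintro c ⟨b, -, rfl⟩ ⟨d, -, hdc⟩
  have h1 := mem_range_cons0_zero m b
  have h2 := mem_range_shf_pos m d
  rw [hdc] at h2
  omega

noncomputable def mainEquiv
    (hT : Submodule.restrictScalars K I = SP K (m+1) (Tset K (m+1) I)) :
    (MvPolynomial (Fin (m + 1)) K ⧸ I) ≃ₗ[K]
      ((MvPolynomial (Fin m) K ⧸ Ideal.comap (MvPolynomial.rename (Fin.succ) :
          MvPolynomial (Fin m) K →ₐ[K] MvPolynomial (Fin (m + 1)) K) I) ×
        (MvPolynomial (Fin (m + 1)) K ⧸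
          Submodule.colon I (Ideal.span {(X 0 : MvPolynomial (Fin (m + 1)) K)}))) := by
  have hT' := restrictScalars_comap m I hT
  have hT'' := restrictScalars_colon m I hT
  set U1 : Set (Fin (m+1) → ℕ) := cons0 m '' (Tset K m (Ideal.comap (MvPolynomial.rename
      (Fin.succ) : MvPolynomial (Fin m) K →ₐ[K] MvPolynomial (Fin (m + 1)) K) I))ᶜ with hU1
  set U2 : Set (Fin (m+1) → ℕ) := shf m '' (Tset K (m+1) (Submodule.colon I
      (Ideal.span {(X 0 : MvPolynomial (Fin (m+1)) K)})))ᶜ with hU2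
  have E1 : (MvPolynomial (Fin (m + 1)) K ⧸ I) ≃ₗ[K] SP K (m+1) ((Tset K (m+1) I)ᶜ) :=
    quotEquivSP (m+1) I hT
  have E2 : SP K (m+1) ((Tset K (m+1) I)ᶜ) ≃ₗ[K] SP K (m+1) (U1 ∪ U2) :=
    LinearEquiv.ofEq _ _ (congrArg (SP K (m+1)) (compl_split m I))
  have E3 : SP K (m+1) (U1 ∪ U2) ≃ₗ[K] (SP K (m+1) U1 × SP K (m+1) U2) :=
    (SPprodEquiv (m+1) U1 U2 (compl_disjoint m _ _)).symm
  have EL1 : SP K (m+1) U1 ≃ₗ[K] SP K m ((Tset K m (Ideal.comap (MvPolynomial.rename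
      (Fin.succ) : MvPolynomial (Fin m) K →ₐ[K] MvPolynomial (Fin (m + 1)) K) I))ᶜ) :=
    (SPmapEquiv ((MvPolynomial.rename (Fin.succ) : MvPolynomial (Fin m) K →ₐ[K]
        MvPolynomial (Fin (m + 1)) K)).toLinearMap
        (MvPolynomial.rename_injective Fin.succ (Fin.succ_injective m))
        (cons0 m) (rename_mono m) _).symm
  have EL2 : SP K m ((Tset K m (Ideal.comap (MvPolynomial.rename
      (Fin.succ) : MvPolynomial (Fin m) K →ₐ[K] MvPolynomial (Fin (m + 1)) K) I))ᶜ)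
      ≃ₗ[K] (MvPolynomial (Fin m) K ⧸ Ideal.comap (MvPolynomial.rename (Fin.succ) :
          MvPolynomial (Fin m) K →ₐ[K] MvPolynomial (Fin (m + 1)) K) I) :=
    (quotEquivSP m _ hT').symm
  have ER1 : SP K (m+1) U2 ≃ₗ[K] SP K (m+1) ((Tset K (m+1) (Submodule.colon I
      (Ideal.span {(X 0 : MvPolynomial (Fin (m+1)) K)})))ᶜ) :=
    (SPmapEquiv (LinearMap.mulRight K (X 0 : MvPolynomial (Fin (m+1)) K))
        (fun p q h => mul_left_injective₀ (MvPolynomial.X_ne_zero 0) (by simpa using h))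
        (shf m) (fun d => mul_X0_mono m d) _).symm
  have ER2 : SP K (m+1) ((Tset K (m+1) (Submodule.colon I
      (Ideal.span {(X 0 : MvPolynomial (Fin (m+1)) K)})))ᶜ)
      ≃ₗ[K] (MvPolynomial (Fin (m + 1)) K ⧸
        Submodule.colon I (Ideal.span {(X 0 : MvPolynomial (Fin (m + 1)) K)})) :=
    (quotEquivSP (m+1) _ hT'').symm
  exact E1.trans (E2.trans (E3.trans (LinearEquiv.prodCongr (EL1.trans EL2) (ER1.trans ER2))))

end MainEquiv

lemma sdepth_ge (m : ℕ) (I : Ideal (MvPolynomial (Fin (m+1)) K))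
    (hT : Submodule.restrictScalars K I = SP K (m+1) (Tset K (m+1) I)) :
    min (sdepthQuot K m (Ideal.comap (MvPolynomial.rename (Fin.succ) :
          MvPolynomial (Fin m) K →ₐ[K] MvPolynomial (Fin (m + 1)) K) I))
        (sdepthQuot K (m+1) (Submodule.colon I
          (Ideal.span {(X 0 : MvPolynomial (Fin (m+1)) K)})))
      ≤ sdepthQuot K (m+1) I := by
  unfold sdepthQuot
  rw [sSup_inf_sSup]
  apply iSup₂_le
  rintro ⟨x, y⟩ hp
  rw [Set.mem_prod] at hp
  obtain ⟨hx, hy⟩ := hp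
  obtain ⟨d', hd', rfl⟩ := hx
  obtain ⟨d'', hd'', rfl⟩ := hy
  obtain ⟨t', a', Z', hsd', hc'⟩ := hd'
  obtain ⟨t'', a'', Z'', hsd'', hc''⟩ := hd''
  have hmin : ((min d' d'' : ℕ) : ℕ∞) = (↑d' ⊓ ↑d'' : ℕ∞) := by
    rcases le_total d' d'' with h | h
    · rw [min_eq_left h, inf_eq_left.2 (by exact_mod_cast h)]
    · rw [min_eq_right h, inf_eq_right.2 (by exact_mod_cast h)]
  show (↑d' ⊓ ↑d'' : ℕ∞) ≤ _
  rw [← hmin]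
  apply le_sSup
  refine ⟨min d' d'', ⟨t' + t'', _, _, combine m I hT hsd' hsd'', ?_⟩, rfl⟩
  intro i
  refine Fin.addCases (motive := fun i => min d' d'' ≤ ((Fin.addCases
      (fun i => (Z' i).image Fin.succ) (fun j => Z'' j) :
        Fin (t'+t'') → Finset (Fin (m+1))) i).card)
    (fun i => ?_) (fun j => ?_) i
  · simp only [Fin.addCases_left]
    rw [Finset.card_image_of_injective _ (Fin.succ_injective m)]
    exact le_trans (min_le_left _ _) (hc' i)
  · simp only [Fin.addCases_right]
    exact le_trans (min_le_right _ _) (hc'' j)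


end SplitProof

open Paper SplitProof
/-- For a monomial ideal `I` with `x_1 ∉ I`, letting `I' = I ∩ S'` and
`I'' = (I : x_1)`, one has a `K`-vector space decomposition
`S/I ≅ S'/I' ⊕ x_1(S/I'')`, whence `sdepth(S/I) ≥ min{sdepth(S'/I'), sdepth(S/I'')}`. -/
theorem sdepth_ge_min_of_split
    (K : Type) [Field K] (m : ℕ) (I : Ideal (MvPolynomial (Fin (m + 1)) K))
    (hI : IsMonomialIdeal K (m + 1) I)
    (hx : (X 0 : MvPolynomial (Fin (m + 1)) K) ∉ I) :
    Nonempty ((MvPolynomial (Fin (m + 1)) K ⧸ I) ≃ₗ[K]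
        ((MvPolynomial (Fin m) K ⧸ Ideal.comap (MvPolynomial.rename (Fin.succ) :
            MvPolynomial (Fin m) K →ₐ[K] MvPolynomial (Fin (m + 1)) K) I) ×
          (MvPolynomial (Fin (m + 1)) K ⧸
            Submodule.colon I (Ideal.span {(X 0 : MvPolynomial (Fin (m + 1)) K)})))) ∧
      sdepthQuot K (m + 1) I ≥
        min (sdepthQuot K m (Ideal.comap (MvPolynomial.rename (Fin.succ) :
              MvPolynomial (Fin m) K →ₐ[K] MvPolynomial (Fin (m + 1)) K) I))
          (sdepthQuot K (m + 1)
            (Submodule.colon I (Ideal.span {(X 0 : MvPolynomial (Fin (m + 1)) K)}))) := by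
  have hT : Submodule.restrictScalars K I = SP K (m+1) (Tset K (m+1) I) :=
    restrictScalars_eq_SP_Tset hI
  exact ⟨⟨mainEquiv m I hT⟩, sdepth_ge m I hT⟩
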